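/- arXiv:1203.3133 — 2 statements merged into one kernel-verified Lean document; each statement's English description precedes it below -/
import Mathlib

section
/- For real A and B with B > 0, the improper integral ∫_0^∞ (e^{−Bx}/x) · sin(Ax) dx equals arctan(A/B). -/
open Real MeasureTheory Filter
open Set intervalIntegral

-- antiderivative in x
lemma hasDerivAt_F (B t : ℝ) (hB : 0 < B) (x : ℝ) :
    HasDerivAt (fun x => Real.exp (-B*x) * (t * Real.sin (t*x) - B * Real.cos (t*x)) / (B^2 + t^2))
      (Real.exp (-B*x) * Real.cos (t*x)) x := by
  have hden : B^2 + t^2 ≠ 0 := by positivity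
  have h1 : HasDerivAt (fun x => Real.exp (-B*x)) (Real.exp (-B*x) * (-B)) x := by
    simpa [Function.comp_def, mul_comm] using (Real.hasDerivAt_exp (-B*x)).comp x ((hasDerivAt_id x).const_mul (-B))
  have h2 : HasDerivAt (fun x => Real.sin (t*x)) (Real.cos (t*x) * t) x := by
    simpa [Function.comp_def] using (Real.hasDerivAt_sin (t*x)).comp x ((hasDerivAt_id x).const_mul t)
  have h3 : HasDerivAt (fun x => Real.cos (t*x)) (-Real.sin (t*x) * t) x := by
    simpa [Function.comp_def] using (Real.hasDerivAt_cos (t*x)).comp x ((hasDerivAt_id x).const_mul t)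
  have h4 := ((h1.mul ((h2.const_mul t).sub (h3.const_mul B))).div_const (B^2 + t^2))
  refine h4.congr_deriv ?_
  rw [div_eq_iff hden]
  simp only [Pi.sub_apply]
  ring

lemma x_integral (B t T : ℝ) (hB : 0 < B) :
    ∫ x in (0:ℝ)..T, Real.exp (-B*x) * Real.cos (t*x)
      = Real.exp (-B*T) * (t * Real.sin (t*T) - B * Real.cos (t*T)) / (B^2 + t^2)
        + B / (B^2 + t^2) := by
  rw [integral_eq_sub_of_hasDerivAt (fun x _ => hasDerivAt_F B t hB x)
    (((Real.continuous_exp.comp (continuous_const.mul continuous_id)).mul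
      (Real.continuous_cos.comp (continuous_const.mul continuous_id))).intervalIntegrable 0 T)]
  simp
  ring

lemma t_integral (A B : ℝ) (hB : 0 < B) :
    ∫ t in (0:ℝ)..A, B / (B^2 + t^2) = Real.arctan (A / B) := by
  have h : ∀ t : ℝ, HasDerivAt (fun t => Real.arctan (t / B)) (B / (B^2 + t^2)) t := by
    intro t
    have := (Real.hasDerivAt_arctan (t / B)).comp t ((hasDerivAt_id t).div_const B)
    refine this.congr_deriv ?_
    have hden : B^2 + t^2 ≠ 0 := by positivity
    have hB' : B ≠ 0 := hB.ne'
    field_simp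
  rw [integral_eq_sub_of_hasDerivAt (fun t _ => h t)
    ((Continuous.div continuous_const (by fun_prop) (fun t => by positivity)).intervalIntegrable 0 A)]
  simp

lemma swap_eq (A B T : ℝ) (hB : 0 < B) (hA : 0 ≤ A) (hT : 0 ≤ T) :
    ∫ x in (0:ℝ)..T, Real.exp (-B*x) / x * Real.sin (A*x)
      = ∫ t in (0:ℝ)..A, ∫ x in (0:ℝ)..T, Real.exp (-B*x) * Real.cos (t*x) := by
  have hcont : Continuous (Function.uncurry fun x t => Real.exp (-B*x) * Real.cos (t*x)) := by
    fun_prop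
  have hint : Integrable (Function.uncurry fun x t => Real.exp (-B*x) * Real.cos (t*x))
      ((volume.restrict (Ioc (0:ℝ) T)).prod (volume.restrict (Ioc (0:ℝ) A))) := by
    haveI : IsFiniteMeasure ((volume : Measure ℝ).restrict (Ioc (0:ℝ) T)) :=
      ⟨by rw [Measure.restrict_apply_univ]; exact measure_Ioc_lt_top⟩
    haveI : IsFiniteMeasure ((volume : Measure ℝ).restrict (Ioc (0:ℝ) A)) :=
      ⟨by rw [Measure.restrict_apply_univ]; exact measure_Ioc_lt_top⟩
    refine Integrable.mono' (integrable_const 1) ?_ ?_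
    · rw [Measure.prod_restrict]; exact hcont.aestronglyMeasurable.restrict
    rw [Measure.prod_restrict, ae_restrict_iff' (measurableSet_Ioc.prod measurableSet_Ioc)]
    refine ae_of_all _ fun p hp => ?_
    obtain ⟨⟨hx0, _⟩, _⟩ := hp
    have : Real.exp (-B*p.1) ≤ 1 := by
      rw [Real.exp_le_one_iff]
      nlinarith
    calc ‖Real.exp (-B*p.1) * Real.cos (p.2*p.1)‖
        = Real.exp (-B*p.1) * |Real.cos (p.2*p.1)| := by
          rw [norm_mul, Real.norm_eq_abs, abs_of_pos (Real.exp_pos _), Real.norm_eq_abs]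
      _ ≤ 1 * 1 := by
          exact mul_le_mul this (Real.abs_cos_le_one _) (abs_nonneg _) zero_le_one
      _ = 1 := one_mul 1
  rw [intervalIntegral.integral_of_le hT, intervalIntegral.integral_of_le hA]
  have key : ∀ x ∈ Ioc (0:ℝ) T,
      Real.exp (-B*x) / x * Real.sin (A*x)
        = ∫ t in Ioc (0:ℝ) A, Real.exp (-B*x) * Real.cos (t*x) := by
    intro x hx
    have hx0 : (0:ℝ) < x := hx.1
    rw [← intervalIntegral.integral_of_le hA, intervalIntegral.integral_const_mul]
    have h : ∀ t : ℝ, HasDerivAt (fun t => Real.sin (t*x) / x) (Real.cos (t*x)) t := by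
      intro t
      have h2 : HasDerivAt (fun t => Real.sin (t*x)) (Real.cos (t*x) * x) t := by
        simpa [Function.comp_def] using
          (Real.hasDerivAt_sin (t*x)).comp t ((hasDerivAt_id t).mul_const x)
      have := h2.div_const x
      simpa [mul_div_assoc, div_self hx0.ne'] using this
    rw [intervalIntegral.integral_eq_sub_of_hasDerivAt (fun t _ => h t)
      ((Real.continuous_cos.comp (continuous_id.mul continuous_const)).intervalIntegrable 0 A)]
    simp
    ring
  rw [setIntegral_congr_fun measurableSet_Ioc key,
    MeasureTheory.integral_integral_swap hint]
  exact setIntegral_congr_fun measurableSet_Ioc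
    fun t _ => (intervalIntegral.integral_of_le hT).symm

lemma main_nonneg (A B : ℝ) (hB : 0 < B) (hA : 0 ≤ A) :
    Tendsto (fun T : ℝ => ∫ x in (0:ℝ)..T, Real.exp (-B * x) / x * Real.sin (A * x))
      atTop (nhds (Real.arctan (A / B))) := by
  set R : ℝ → ℝ := fun T =>
    ∫ t in (0:ℝ)..A, Real.exp (-B*T) * (t * Real.sin (t*T) - B * Real.cos (t*T)) / (B^2 + t^2)
    with hRdef
  have hc1 : ∀ T : ℝ, Continuous fun t =>
      Real.exp (-B*T) * (t * Real.sin (t*T) - B * Real.cos (t*T)) / (B^2 + t^2) := by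
    intro T
    exact Continuous.div (by fun_prop) (by fun_prop) fun t => by positivity
  have hc2 : Continuous fun t : ℝ => B / (B^2 + t^2) :=
    Continuous.div continuous_const (by fun_prop) fun t => by positivity
  have hid : ∀ T : ℝ, 0 ≤ T →
      (∫ x in (0:ℝ)..T, Real.exp (-B * x) / x * Real.sin (A * x))
        = Real.arctan (A / B) + R T := by
    intro T hT
    rw [swap_eq A B T hB hA hT]
    have : (∫ t in (0:ℝ)..A, ∫ x in (0:ℝ)..T, Real.exp (-B*x) * Real.cos (t*x))
        = ∫ t in (0:ℝ)..A,
            (Real.exp (-B*T) * (t * Real.sin (t*T) - B * Real.cos (t*T)) / (B^2 + t^2)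
              + B / (B^2 + t^2)) := by
      apply intervalIntegral.integral_congr
      intro t _
      exact x_integral B t T hB
    rw [this, intervalIntegral.integral_add ((hc1 T).intervalIntegrable 0 A)
      (hc2.intervalIntegrable 0 A), t_integral A B hB, add_comm]
  have hexp : Tendsto (fun T : ℝ => Real.exp (-B*T)) atTop (nhds 0) := by
    have h1 : Tendsto (fun T : ℝ => B*T) atTop atTop :=
      tendsto_id.const_mul_atTop hB
    simpa [neg_mul, Function.comp_def] using
      (Real.tendsto_exp_neg_atTop_nhds_zero).comp h1
  have hR0 : Tendsto R atTop (nhds 0) := by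
    apply squeeze_zero_norm' (a := fun T => Real.exp (-B*T) * (A+B) / B^2 * A)
    · filter_upwards [eventually_ge_atTop (0:ℝ)] with T hT
      have hbound : ∀ t ∈ Set.uIoc (0:ℝ) A,
          ‖Real.exp (-B*T) * (t * Real.sin (t*T) - B * Real.cos (t*T)) / (B^2 + t^2)‖
            ≤ Real.exp (-B*T) * (A+B) / B^2 := by
        intro t ht
        rw [Set.uIoc_of_le hA] at ht
        obtain ⟨ht0, htA⟩ := ht
        have hden : (0:ℝ) < B^2 + t^2 := by positivity
        rw [norm_div, norm_mul, Real.norm_eq_abs, Real.norm_eq_abs, Real.norm_eq_abs,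
          abs_of_pos (Real.exp_pos _), abs_of_pos hden]
        have h1 : |t * Real.sin (t*T) - B * Real.cos (t*T)| ≤ A + B := by
          have := abs_sub (t * Real.sin (t*T)) (B * Real.cos (t*T))
          have hs : |t * Real.sin (t*T)| ≤ A :=
            (abs_mul _ _).le.trans (by
              nlinarith [Real.abs_sin_le_one (t*T), abs_of_pos ht0, abs_nonneg t])
          have hcc : |B * Real.cos (t*T)| ≤ B := by
            rw [abs_mul, abs_of_pos hB]
            nlinarith [Real.abs_cos_le_one (t*T), abs_nonneg (Real.cos (t*T))]
          calc |t * Real.sin (t*T) - B * Real.cos (t*T)|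
              ≤ |t * Real.sin (t*T)| + |B * Real.cos (t*T)| := abs_sub _ _
            _ ≤ A + B := add_le_add hs hcc
        have hB2 : B^2 ≤ B^2 + t^2 := by nlinarith
        calc Real.exp (-B*T) * |t * Real.sin (t*T) - B * Real.cos (t*T)| / (B^2 + t^2)
            ≤ Real.exp (-B*T) * (A+B) / (B^2 + t^2) := by
              gcongr
          _ ≤ Real.exp (-B*T) * (A+B) / B^2 := by
              gcongr
      have := intervalIntegral.norm_integral_le_of_norm_le_const hbound
      simp only [hRdef]
      simpa [abs_of_nonneg hA] using this
    · have : Tendsto (fun T : ℝ => Real.exp (-B*T) * (A+B) / B^2 * A) atTop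
          (nhds (0 * (A+B) / B^2 * A)) :=
        ((hexp.mul_const (A+B)).div_const (B^2)).mul_const A
      simpa using this
  have heq : (fun T : ℝ => Real.arctan (A / B) + R T)
      =ᶠ[atTop] fun T : ℝ => ∫ x in (0:ℝ)..T, Real.exp (-B * x) / x * Real.sin (A * x) := by
    filter_upwards [eventually_ge_atTop (0:ℝ)] with T hT
    exact (hid T hT).symm
  have := (tendsto_const_nhds (α := ℝ) (x := Real.arctan (A / B)) (f := atTop)).add hR0
  rw [add_zero] at this
  exact this.congr' heq

theorem integral_exp_div_mul_sin (A B : ℝ) (hB : 0 < B) :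
    Tendsto (fun T : ℝ => ∫ x in (0:ℝ)..T, Real.exp (-B * x) / x * Real.sin (A * x))
      atTop (nhds (Real.arctan (A / B))) := by
  rcases le_or_gt 0 A with hA | hA
  · exact main_nonneg A B hB hA
  · have h := (main_nonneg (-A) B hB (by linarith)).neg
    have heq : (fun T : ℝ => ∫ x in (0:ℝ)..T, Real.exp (-B * x) / x * Real.sin (A * x))
        = fun T : ℝ => -∫ x in (0:ℝ)..T, Real.exp (-B * x) / x * Real.sin (-A * x) := by
      funext T
      rw [← intervalIntegral.integral_neg]
      apply intervalIntegral.integral_congr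
      intro x _
      simp only [neg_mul, Real.sin_neg]
      ring
    rw [heq]
    simpa [neg_div, Real.arctan_neg] using h
end

section
/- For every n ≥ 1 and t > 0, with a_n = cos(π/(2(2n+1))) and b_n = sin(π/(2(2n+1))), the quantity ∫_0^∞ (1/(πx)) [∫_0^∞ e^{−b_n x w} sin(a_n x w) · (2n+1) t w^{2n} e^{−t w^{2n+1}} dw] dx equals (1/2)(1 − 1/(2n+1)). -/
open Real MeasureTheory Set Filter

lemma exp_cos_int {a b : ℝ} (hb : 0 < b) :
    ∫ x in Set.Ioi (0:ℝ), Real.exp (-b*x) * Real.cos (a*x) = b / (a^2 + b^2) := by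
  have hD : (0:ℝ) < a^2 + b^2 := by positivity
  set G : ℝ → ℝ := fun x => Real.exp (-b*x) * (a * Real.sin (a*x) - b * Real.cos (a*x)) / (a^2+b^2) with hG
  have hderiv : ∀ x : ℝ, HasDerivAt G (Real.exp (-b*x) * Real.cos (a*x)) x := by
    intro x
    have h0 : HasDerivAt (fun x : ℝ => -b*x) (-b) x := by
      simpa using (hasDerivAt_id x).const_mul (-b)
    have ha0 : HasDerivAt (fun x : ℝ => a*x) a x := by
      simpa using (hasDerivAt_id x).const_mul a
    have h1 : HasDerivAt (fun x : ℝ => Real.exp (-b*x)) (Real.exp (-b*x) * (-b)) x := h0.exp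
    have h2 : HasDerivAt (fun x : ℝ => a * Real.sin (a*x) - b * Real.cos (a*x))
        (a * (Real.cos (a*x) * a) - b * (-Real.sin (a*x) * a)) x :=
      (ha0.sin.const_mul a).sub (ha0.cos.const_mul b)
    have := (h1.mul h2).div_const (a^2+b^2)
    refine this.congr_deriv ?_
    field_simp
    ring
  have hint : IntegrableOn (fun x => Real.exp (-b*x) * Real.cos (a*x)) (Set.Ioi (0:ℝ)) := by
    refine (exp_neg_integrableOn_Ioi 0 hb).mono' ?_ ?_
    · exact ((Real.continuous_exp.comp (continuous_const.mul continuous_id)).mul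
        (Real.continuous_cos.comp (continuous_const.mul continuous_id))).aestronglyMeasurable
    · filter_upwards with x
      rw [norm_mul, Real.norm_eq_abs, Real.norm_eq_abs, abs_of_pos (Real.exp_pos _)]
      nlinarith [Real.abs_cos_le_one (a*x), Real.exp_pos (-b*x), abs_nonneg (Real.cos (a*x))]
  have htend : Tendsto G atTop (nhds 0) := by
    have hbd : ∀ x, ‖G x‖ ≤ Real.exp (-b*x) * ((|a|+|b|)/(a^2+b^2)) := by
      intro x
      rw [hG]
      simp only [Real.norm_eq_abs, abs_div, abs_mul, abs_of_pos (Real.exp_pos _),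
        abs_of_pos hD]
      rw [div_le_iff₀ hD, mul_assoc]
      gcongr
      calc |a * Real.sin (a*x) - b * Real.cos (a*x)| ≤ |a * Real.sin (a*x)| + |b * Real.cos (a*x)| := abs_sub _ _
        _ ≤ |a| + |b| := by
            rw [abs_mul, abs_mul]
            nlinarith [Real.abs_sin_le_one (a*x), Real.abs_cos_le_one (a*x), abs_nonneg a, abs_nonneg b, abs_nonneg (Real.sin (a*x)), abs_nonneg (Real.cos (a*x))]
        _ = (|a|+|b|)/(a^2+b^2) * (a^2+b^2) := by field_simp
    refine squeeze_zero_norm hbd ?_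
    rw [show (0:ℝ) = 0 * ((|a|+|b|)/(a^2+b^2)) by ring]
    apply Tendsto.mul_const
    apply Real.tendsto_exp_atBot.comp
    have : Tendsto (fun x : ℝ => b * x) atTop atTop := tendsto_id.const_mul_atTop hb
    have h2 := tendsto_neg_atTop_atBot.comp this
    refine h2.congr fun x => ?_
    simp [neg_mul]
  have key := integral_Ioi_of_hasDerivAt_of_tendsto (a := 0)
    (hderiv 0).continuousAt.continuousWithinAt (fun x _ => hderiv x) hint htend
  rw [key, hG]
  norm_num [neg_div]

lemma integrableOn_exp_sin_div {b : ℝ} (hb : 0 < b) (c : ℝ) :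
    IntegrableOn (fun x => Real.exp (-b*x) * Real.sin (c*x) / x) (Set.Ioi (0:ℝ)) := by
  refine ((exp_neg_integrableOn_Ioi 0 hb).const_mul |c|).mono' ?_ ?_
  · apply Measurable.aestronglyMeasurable
    fun_prop
  · filter_upwards [ae_restrict_mem measurableSet_Ioi] with x hx
    have hx0 : (0:ℝ) < x := hx
    rw [Real.norm_eq_abs, abs_div, abs_mul, abs_of_pos (Real.exp_pos _), abs_of_pos hx0,
      div_le_iff₀ hx0]
    calc Real.exp (-b*x) * |Real.sin (c*x)| ≤ Real.exp (-b*x) * |c*x| := by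
          exact mul_le_mul_of_nonneg_left Real.abs_sin_le_abs (Real.exp_nonneg _)
      _ = |c| * Real.exp (-b*x) * x := by rw [abs_mul, abs_of_pos hx0]; ring

lemma exp_sin_div_int {b : ℝ} (hb : 0 < b) (a : ℝ) :
    ∫ x in Set.Ioi (0:ℝ), Real.exp (-b*x) * Real.sin (a*x) / x = Real.arctan (a/b) := by
  set F : ℝ → ℝ := fun c => ∫ x in Set.Ioi (0:ℝ), Real.exp (-b*x) * Real.sin (c*x) / x with hF
  have key : ∀ c : ℝ, HasDerivAt F (b / (c^2 + b^2)) c := by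
    intro c
    have main := hasDerivAt_integral_of_dominated_loc_of_deriv_le
      (F := fun c x => Real.exp (-b*x) * Real.sin (c*x) / x)
      (F' := fun c x => Real.exp (-b*x) * Real.cos (c*x))
      (x₀ := c) (bound := fun x => Real.exp (-b*x))
      (μ := volume.restrict (Set.Ioi (0:ℝ))) (Metric.ball_mem_nhds c one_pos)
      ?_ (integrableOn_exp_sin_div hb c) ?_ ?_ ?_ ?_
    · have hval : (∫ x in Set.Ioi (0:ℝ), Real.exp (-b*x) * Real.cos (c*x)) = b/(c^2+b^2) :=
        exp_cos_int hb
      rw [hval] at main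
      exact main.2
    · filter_upwards with c'
      apply Measurable.aestronglyMeasurable; fun_prop
    · apply Measurable.aestronglyMeasurable; fun_prop
    · filter_upwards with x c' _
      rw [Real.norm_eq_abs, abs_mul, abs_of_pos (Real.exp_pos _)]
      nlinarith [Real.abs_cos_le_one (c'*x), Real.exp_pos (-b*x), abs_nonneg (Real.cos (c'*x))]
    · exact exp_neg_integrableOn_Ioi 0 hb
    · filter_upwards [ae_restrict_mem measurableSet_Ioi] with x hx c' _
      have hx0 : (0:ℝ) < x := hx
      have h1 : HasDerivAt (fun c' : ℝ => c'*x) x c' := by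
        simpa using (hasDerivAt_id c').mul_const x
      have := ((h1.sin.const_mul (Real.exp (-b*x))).div_const x)
      refine this.congr_deriv ?_
      field_simp
  have harct : ∀ c : ℝ, HasDerivAt (fun c : ℝ => Real.arctan (c/b)) (b / (c^2+b^2)) c := by
    intro c
    have h1 : HasDerivAt (fun c : ℝ => c/b) (1/b) c := by
      simpa [div_eq_mul_inv] using (hasDerivAt_id c).mul_const b⁻¹
    have := (Real.hasDerivAt_arctan (c/b)).comp c h1
    refine this.congr_deriv ?_
    rw [div_pow]
    field_simp
    ring
  have hdiff : ∀ c : ℝ, HasDerivAt (fun c => F c - Real.arctan (c/b)) 0 c := by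
    intro c
    exact ((key c).sub (harct c)).congr_deriv (by simp)
  have hconst := is_const_of_deriv_eq_zero (f := fun c => F c - Real.arctan (c/b))
    (fun c => (hdiff c).differentiableAt) (fun c => (hdiff c).deriv) a 0
  have hF0 : F 0 = 0 := by
    rw [hF]
    simp
  rw [hF0] at hconst
  simp only [zero_div, Real.arctan_zero, sub_zero, zero_sub] at hconst
  linarith [hconst]

lemma density_hasDeriv (n : ℕ) {t : ℝ} (ht : 0 < t) (w : ℝ) :
    HasDerivAt (fun w : ℝ => -Real.exp (-t * w^(2*n+1)))
      ((2*(n:ℝ)+1) * t * w^(2*n) * Real.exp (-t * w^(2*n+1))) w := by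
  have h1 : HasDerivAt (fun w : ℝ => -t * w^(2*n+1)) (-t * ((2*n+1) * w^(2*n))) w := by
    have := (hasDerivAt_pow (2*n+1) w).const_mul (-t)
    simpa using this
  have := h1.exp.neg
  refine this.congr_deriv ?_
  push_cast
  ring

lemma density_tendsto (n : ℕ) {t : ℝ} (ht : 0 < t) :
    Filter.Tendsto (fun w : ℝ => -Real.exp (-t * w^(2*n+1))) Filter.atTop (nhds 0) := by
  rw [show (0:ℝ) = -0 by ring]
  apply Filter.Tendsto.neg
  apply Real.tendsto_exp_atBot.comp
  have h1 : Filter.Tendsto (fun w : ℝ => t * w^(2*n+1)) Filter.atTop Filter.atTop :=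
    (tendsto_pow_atTop (by omega)).const_mul_atTop ht
  refine (tendsto_neg_atTop_atBot.comp h1).congr fun w => ?_
  simp [neg_mul]

lemma density_int (n : ℕ) {t : ℝ} (ht : 0 < t) :
    ∫ w in Set.Ioi (0:ℝ), (2*(n:ℝ)+1) * t * w^(2*n) * Real.exp (-t * w^(2*n+1)) = 1 := by
  have key := integral_Ioi_of_hasDerivAt_of_nonneg' (a := 0)
    (fun w _ => density_hasDeriv n ht w)
    (fun w hw => by have hw0 : (0:ℝ) < w := hw; positivity) (density_tendsto n ht)
  rw [key]
  norm_num

lemma density_integrable (n : ℕ) {t : ℝ} (ht : 0 < t) :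
    IntegrableOn (fun w => (2*(n:ℝ)+1) * t * w^(2*n) * Real.exp (-t * w^(2*n+1))) (Set.Ioi (0:ℝ)) :=
  integrableOn_Ioi_deriv_of_nonneg' (fun w _ => density_hasDeriv n ht w)
    (fun w hw => by have hw0 : (0:ℝ) < w := hw; positivity) (density_tendsto n ht)

lemma abs_sin_le_sqrt {u : ℝ} (hu : 0 ≤ u) : |Real.sin u| ≤ Real.sqrt u := by
  rcases le_or_gt u 1 with h | h
  · calc |Real.sin u| ≤ |u| := Real.abs_sin_le_abs
      _ = u := abs_of_nonneg hu
      _ ≤ Real.sqrt u := Real.le_sqrt_of_sq_le (by nlinarith)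
  · calc |Real.sin u| ≤ 1 := Real.abs_sin_le_one u
      _ ≤ Real.sqrt u := Real.le_sqrt_of_sq_le (by nlinarith)

noncomputable def Dfun (t : ℝ) (n : ℕ) (w : ℝ) : ℝ :=
  (2*(n:ℝ)+1) * t * w^(2*n) * Real.exp (-t * w^(2*n+1))

noncomputable def Ffun (a b t : ℝ) (n : ℕ) (x w : ℝ) : ℝ :=
  1/(Real.pi*x) * (Real.exp (-b*x*w) * Real.sin (a*x*w) * Dfun t n w)

lemma Ffun_meas (a b t : ℝ) (n : ℕ) : Measurable (Function.uncurry (Ffun a b t n)) := by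
  unfold Function.uncurry Ffun Dfun
  fun_prop

lemma Dfun_nonneg {t : ℝ} (ht : 0 < t) (n : ℕ) {w : ℝ} (hw : 0 < w) : 0 ≤ Dfun t n w := by
  unfold Dfun; positivity

-- pointwise bound for fixed w > 0
lemma Ffun_bound {a b t : ℝ} (ha : 0 < a) (hb : 0 < b) (ht : 0 < t) (n : ℕ)
    {w : ℝ} (hw : 0 < w) {x : ℝ} (hx : 0 < x) :
    ‖Ffun a b t n x w‖ ≤ (1/Real.pi * Real.sqrt (a*w) * Dfun t n w) *
      (x ^ (-(1/2) : ℝ) * Real.exp (-(b*w) * x ^ (1:ℝ))) := by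
  have hpi := Real.pi_pos
  have hD := Dfun_nonneg ht n hw
  have hsx : Real.sqrt x * Real.sqrt x = x := Real.mul_self_sqrt hx.le
  have hsxne : Real.sqrt x ≠ 0 := by positivity
  calc ‖Ffun a b t n x w‖
      = (1/(Real.pi*x)) * (Real.exp (-b*x*w) * |Real.sin (a*x*w)| * Dfun t n w) := by
        unfold Ffun
        rw [Real.norm_eq_abs, abs_mul, abs_mul, abs_mul,
          abs_of_pos (by positivity : (0:ℝ) < 1/(Real.pi*x)),
          abs_of_pos (Real.exp_pos _), abs_of_nonneg hD]
    _ ≤ (1/(Real.pi*x)) * (Real.exp (-b*x*w) * (Real.sqrt (a*w) * Real.sqrt x) * Dfun t n w) := by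
        gcongr
        calc |Real.sin (a*x*w)| ≤ Real.sqrt (a*x*w) := abs_sin_le_sqrt (by positivity)
          _ = Real.sqrt (a*w) * Real.sqrt x := by
              rw [show a*x*w = (a*w)*x by ring, Real.sqrt_mul (by positivity)]
    _ = (1/Real.pi * Real.sqrt (a*w) * Dfun t n w) *
        (x ^ (-(1/2) : ℝ) * Real.exp (-(b*w) * x ^ (1:ℝ))) := by
        rw [Real.rpow_one, show -(b*w)*x = -b*x*w by ring,
          show ((-(1/2) : ℝ)) = -(1/2 : ℝ) by norm_num,
          Real.rpow_neg hx.le, ← Real.sqrt_eq_rpow]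
        have hxinv : 1/(Real.pi * x) = 1/Real.pi * ((Real.sqrt x)⁻¹ * (Real.sqrt x)⁻¹) := by
          rw [← hsx]; field_simp; rw [Real.sqrt_sq (Real.sqrt_nonneg _)]
        rw [hxinv]
        field_simp

lemma Ffun_sec_integrable {a b t : ℝ} (ha : 0 < a) (hb : 0 < b) (ht : 0 < t) (n : ℕ)
    {w : ℝ} (hw : 0 < w) :
    Integrable (fun x => Ffun a b t n x w) (volume.restrict (Set.Ioi (0:ℝ))) := by
  refine ((integrableOn_rpow_mul_exp_neg_mul_rpow (by norm_num : (-1:ℝ) < -(1/2)) one_pos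
    (mul_pos hb hw)).const_mul (1/Real.pi * Real.sqrt (a*w) * Dfun t n w)).mono' ?_ ?_
  · apply Measurable.aestronglyMeasurable
    have := Ffun_meas a b t n
    exact this.comp (measurable_id.prodMk measurable_const)
  · filter_upwards [ae_restrict_mem measurableSet_Ioi] with x hx
    exact Ffun_bound ha hb ht n hw hx

lemma Ffun_sec_norm_bound {a b t : ℝ} (ha : 0 < a) (hb : 0 < b) (ht : 0 < t) (n : ℕ)
    {w : ℝ} (hw : 0 < w) :
    (∫ x in Set.Ioi (0:ℝ), ‖Ffun a b t n x w‖) ≤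
      (1/Real.pi * Real.sqrt (a/b) * Real.Gamma (1/2)) * Dfun t n w := by
  have hpi := Real.pi_pos
  have hD := Dfun_nonneg ht n hw
  have hbw : 0 < b*w := mul_pos hb hw
  have h1 : (∫ x in Set.Ioi (0:ℝ), ‖Ffun a b t n x w‖) ≤
      ∫ x in Set.Ioi (0:ℝ), (1/Real.pi * Real.sqrt (a*w) * Dfun t n w) *
        (x ^ (-(1/2) : ℝ) * Real.exp (-(b*w) * x ^ (1:ℝ))) := by
    refine integral_mono_ae (Ffun_sec_integrable ha hb ht n hw).norm
      ((integrableOn_rpow_mul_exp_neg_mul_rpow (by norm_num : (-1:ℝ) < -(1/2)) one_pos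
        hbw).const_mul _) ?_
    filter_upwards [ae_restrict_mem measurableSet_Ioi] with x hx
    exact Ffun_bound ha hb ht n hw hx
  refine h1.trans (le_of_eq ?_)
  rw [MeasureTheory.integral_const_mul,
    integral_rpow_mul_exp_neg_mul_rpow one_pos (by norm_num : (-1:ℝ) < -(1/2)) hbw]
  have hexp : (-(-(1/2) + 1) / 1 : ℝ) = -(1/2) := by norm_num
  have hexp2 : ((-(1/2) + 1) / 1 : ℝ) = 1/2 := by norm_num
  rw [hexp, hexp2]
  have hkey : Real.sqrt (a*w) * (b*w) ^ (-(1/2) : ℝ) = Real.sqrt (a/b) := by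
    rw [show ((-(1/2):ℝ)) = -(1/2:ℝ) by norm_num, Real.rpow_neg hbw.le, ← Real.sqrt_eq_rpow,
      ← Real.sqrt_inv, ← Real.sqrt_mul (by positivity)]
    congr 1
    field_simp
  rw [← hkey]
  ring

lemma fubini_core {a b t : ℝ} (ha : 0 < a) (hb : 0 < b) (ht : 0 < t) (n : ℕ) :
    (∫ x in Set.Ioi (0:ℝ), (1 / (Real.pi * x)) *
      ∫ w in Set.Ioi (0:ℝ),
        Real.exp (-b * x * w) * Real.sin (a * x * w) *
          ((2 * (n:ℝ) + 1) * t * w ^ (2 * n) * Real.exp (-t * w ^ (2 * n + 1))))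
      = Real.arctan (a / b) / Real.pi := by
  have hpi := Real.pi_pos
  have hInt : Integrable (Function.uncurry (Ffun a b t n))
      ((volume.restrict (Set.Ioi (0:ℝ))).prod (volume.restrict (Set.Ioi (0:ℝ)))) := by
    rw [integrable_prod_iff' (Ffun_meas a b t n).aestronglyMeasurable]
    constructor
    · filter_upwards [ae_restrict_mem measurableSet_Ioi] with w hw
      exact Ffun_sec_integrable ha hb ht n hw
    · refine ((density_integrable n ht).const_mul
        (1/Real.pi * Real.sqrt (a/b) * Real.Gamma (1/2))).mono' ?_ ?_
      · exact ((Ffun_meas a b t n).norm.stronglyMeasurable.integral_prod_left').aestronglyMeasurable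
      · filter_upwards [ae_restrict_mem measurableSet_Ioi] with w hw
        rw [Real.norm_eq_abs, abs_of_nonneg (integral_nonneg fun x => norm_nonneg _)]
        exact Ffun_sec_norm_bound ha hb ht n hw
  calc (∫ x in Set.Ioi (0:ℝ), (1 / (Real.pi * x)) *
      ∫ w in Set.Ioi (0:ℝ),
        Real.exp (-b * x * w) * Real.sin (a * x * w) *
          ((2 * (n:ℝ) + 1) * t * w ^ (2 * n) * Real.exp (-t * w ^ (2 * n + 1))))
      = ∫ x in Set.Ioi (0:ℝ), ∫ w in Set.Ioi (0:ℝ), Ffun a b t n x w := by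
        apply integral_congr_ae
        filter_upwards with x
        rw [← MeasureTheory.integral_const_mul]
        simp only [Ffun, Dfun]
    _ = ∫ w in Set.Ioi (0:ℝ), ∫ x in Set.Ioi (0:ℝ), Ffun a b t n x w :=
        integral_integral_swap hInt
    _ = ∫ w in Set.Ioi (0:ℝ), Real.arctan (a/b)/Real.pi * Dfun t n w := by
        apply setIntegral_congr_fun measurableSet_Ioi
        intro w hw
        have hw0 : (0:ℝ) < w := hw
        have hbw : 0 < b*w := mul_pos hb hw0
        calc (∫ x in Set.Ioi (0:ℝ), Ffun a b t n x w)
            = ∫ x in Set.Ioi (0:ℝ), (Dfun t n w / Real.pi) *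
                (Real.exp (-(b*w)*x) * Real.sin ((a*w)*x) / x) := by
              apply setIntegral_congr_fun measurableSet_Ioi
              intro x hx
              have hx0 : (0:ℝ) < x := hx
              unfold Ffun
              dsimp only
              rw [show -(b*w)*x = -b*x*w by ring, show (a*w)*x = a*x*w by ring]
              field_simp
          _ = (Dfun t n w / Real.pi) * Real.arctan ((a*w)/(b*w)) := by
              rw [MeasureTheory.integral_const_mul, exp_sin_div_int hbw (a*w)]
          _ = Real.arctan (a/b)/Real.pi * Dfun t n w := by
              rw [mul_div_mul_right _ _ (ne_of_gt hw0)]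
              ring
    _ = Real.arctan (a/b)/Real.pi := by
        rw [MeasureTheory.integral_const_mul]
        have := density_int n ht
        simp only [Dfun]
        rw [this, mul_one]

theorem odd_order_halfline_mass (n : ℕ) (hn : 1 ≤ n) (t : ℝ) (ht : 0 < t) :
    ∫ x in Set.Ioi (0:ℝ), (1 / (Real.pi * x)) *
      ∫ w in Set.Ioi (0:ℝ),
        Real.exp (-(Real.sin (Real.pi / (2 * (2 * n + 1)))) * x * w) *
          Real.sin ((Real.cos (Real.pi / (2 * (2 * n + 1)))) * x * w) *
          ((2 * n + 1) * t * w ^ (2 * n) * Real.exp (-t * w ^ (2 * n + 1)))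
      = (1 / 2) * (1 - 1 / (2 * n + 1)) := by
  have hpi := Real.pi_pos
  have hcast : (1:ℝ) ≤ (n:ℝ) := by exact_mod_cast hn
  set θ : ℝ := Real.pi / (2 * (2 * (n:ℝ) + 1)) with hθdef
  have hθ0 : 0 < θ := by rw [hθdef]; positivity
  have hθ2 : θ < Real.pi / 2 := by
    rw [hθdef]
    apply div_lt_div_of_pos_left hpi two_pos
    nlinarith
  have ha : 0 < Real.cos θ := Real.cos_pos_of_mem_Ioo ⟨by linarith, hθ2⟩
  have hb : 0 < Real.sin θ := Real.sin_pos_of_pos_of_lt_pi hθ0 (by linarith)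
  rw [fubini_core ha hb ht n]
  have harct : Real.arctan (Real.cos θ / Real.sin θ) = Real.pi/2 - θ := by
    rw [show Real.cos θ / Real.sin θ = Real.tan (Real.pi/2 - θ) by
      rw [Real.tan_pi_div_two_sub, Real.tan_eq_sin_div_cos, inv_div]]
    exact Real.arctan_tan (by linarith) (by linarith)
  rw [harct, hθdef]
  have h1 : (2*(n:ℝ)+1) ≠ 0 := by positivity
  field_simp
end
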